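/- arXiv:1604.00591 — 4 statements merged into one kernel-verified Lean document; each statement's English description precedes it below -/
import Mathlib

section
/- Define F_p(λ) = [ (1/2)( (λ^{p/2} + (1−λ)^{p/2})^4 − (λ^p + (1−λ)^p)^2 ) ]^{1/p} for λ ∈ [0,1]. If 0 < p ≤ 3, then F_p attains its maximum on [0,1] uniquely at λ = 1/2. -/
open Matrix
open scoped ComplexOrder

private lemma keypoly {t : ℝ} (h0 : 0 ≤ t) (h1 : t < 1/2) : t^3 - 3*t^5 + t^6 < 3/64 := by
  have hg : 0 < -t^4 + 2*t^3 + 9/4*t^2 + 3/4*t + 3/16 := by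
    nlinarith [mul_nonneg (mul_nonneg (mul_nonneg h0 h0) h0) (by linarith : (0:ℝ) ≤ 2 - t), sq_nonneg t]
  have hsq : 0 < (1/2 - t)^2 := pow_pos (by linarith) 2
  nlinarith [mul_pos hsq hg]

private lemma pm3 {X Y Z s : ℝ} (hX : 0 ≤ X) (hY : 0 ≤ Y) (hZ : 0 ≤ Z) (hs : 0 < s) (hs1 : s ≤ 1) :
    X ^ s + Y ^ s + Z ^ s ≤ 3 * ((X + Y + Z) / 3) ^ s := by
  have h := Real.arith_mean_le_rpow_mean (Finset.univ : Finset (Fin 3))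
    (fun _ => 1/3) ![X ^ s, Y ^ s, Z ^ s]
    (fun i _ => by norm_num)
    (by norm_num [Fin.sum_univ_three])
    (fun i _ => by fin_cases i <;> simp <;> positivity)
    (p := 1/s) (by rw [le_div_iff₀ hs]; linarith)
  simp only [Fin.sum_univ_three, Matrix.cons_val_zero, Matrix.cons_val_one, Matrix.head_cons,
    Matrix.cons_val_two, Matrix.tail_cons, one_div_one_div] at h
  rw [← Real.rpow_mul hX, ← Real.rpow_mul hY, ← Real.rpow_mul hZ,
    mul_one_div, div_self hs.ne', Real.rpow_one, Real.rpow_one, Real.rpow_one] at h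
  calc X ^ s + Y ^ s + Z ^ s
      = 3 * (1 / 3 * X ^ s + 1 / 3 * Y ^ s + 1 / 3 * Z ^ s) := by ring
    _ ≤ 3 * (1 / 3 * X + 1 / 3 * Y + 1 / 3 * Z) ^ s := by linarith
    _ = 3 * ((X + Y + Z) / 3) ^ s := by ring_nf

private lemma sq_rpow_3half {x : ℝ} (hx : 0 ≤ x) : (x^2) ^ ((3:ℝ)/2) = x^3 := by
  rw [← Real.rpow_natCast x 2, ← Real.rpow_natCast x 3, ← Real.rpow_mul hx]
  norm_num

private lemma key3 {l : ℝ} (hl0 : 0 ≤ l) (hl1 : l ≤ 1) (hne : l ≠ 1/2) :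
    (l^3*(1-l)) ^ ((3:ℝ)/2) + (l^2*(1-l)^2) ^ ((3:ℝ)/2) + (l*(1-l)^3) ^ ((3:ℝ)/2) < 3/64 := by
  set t := Real.sqrt (l*(1-l)) with hts
  have hm : 0 ≤ l*(1-l) := mul_nonneg hl0 (by linarith)
  have ht2 : t^2 = l*(1-l) := Real.sq_sqrt hm
  have ht0 : 0 ≤ t := Real.sqrt_nonneg _
  have htlt : t < 1/2 := by
    have : l*(1-l) < 1/4 := by
      rcases lt_or_gt_of_ne hne with h | h <;> nlinarith
    nlinarith
  have e1 : l^3*(1-l) = (l*t)^2 := by rw [mul_pow, ht2]; ring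
  have e2 : l^2*(1-l)^2 = (t^2)^2 := by rw [ht2]; ring
  have e3 : l*(1-l)^3 = ((1-l)*t)^2 := by rw [mul_pow, ht2]; ring
  rw [e1, e2, e3, sq_rpow_3half (by positivity), sq_rpow_3half (by positivity),
    sq_rpow_3half (by nlinarith : (0:ℝ) ≤ (1-l)*t)]
  have hident : (l*t)^3 + (t^2)^3 + ((1-l)*t)^3 = t^3 - 3*t^5 + t^6 := by
    linear_combination (3*t^3) * ht2
  rw [hident]
  exact keypoly ht0 htlt

private lemma prod_rpow {x y : ℝ} (hx : 0 ≤ x) (hy : 0 ≤ y) (r : ℝ) (m n : ℕ) :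
    (x^m * y^n) ^ r = (x^r)^m * (y^r)^n := by
  rw [Real.mul_rpow (by positivity) (by positivity), ← Real.rpow_natCast x m,
    ← Real.rpow_natCast y n, ← Real.rpow_mul hx, ← Real.rpow_mul hy,
    mul_comm (m:ℝ) r, mul_comm (n:ℝ) r, Real.rpow_mul hx, Real.rpow_mul hy,
    Real.rpow_natCast, Real.rpow_natCast]

/-- For `0 < p ≤ 3`, `F_p` attains its maximum on `[0,1]` uniquely at `λ = 1/2`. -/
theorem stmt8 (p : ℝ) (hp : 0 < p) (hp3 : p ≤ 3)
    (F : ℝ → ℝ)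
    (hF : ∀ l, F l = ((1 / 2) * ((l ^ (p / 2) + (1 - l) ^ (p / 2)) ^ 4
        - (l ^ p + (1 - l) ^ p) ^ 2)) ^ (1 / p)) :
    ∀ l ∈ Set.Icc (0 : ℝ) 1, l ≠ 1 / 2 → F l < F (1 / 2) := by
  intro l hl hne
  obtain ⟨hl0, hl1⟩ := hl
  have hl1' : (0:ℝ) ≤ 1 - l := by linarith
  set a := l ^ (p/2) with ha
  set b := (1-l) ^ (p/2) with hb
  have ha0 : 0 ≤ a := Real.rpow_nonneg hl0 _
  have hb0 : 0 ≤ b := Real.rpow_nonneg hl1' _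
  -- squares
  have sqr : ∀ x : ℝ, 0 ≤ x → (x ^ (p/2))^2 = x ^ p := by
    intro x hx
    rw [← Real.rpow_natCast (x ^ (p/2)) 2, ← Real.rpow_mul hx]
    norm_num
  have ha2 : a^2 = l ^ p := sqr l hl0
  have hb2 : b^2 = (1-l) ^ p := sqr (1-l) hl1'
  -- value at 1/2
  have hhalf : ((1:ℝ)/2) * (((1/2:ℝ) ^ (p/2) + (1 - 1/2:ℝ) ^ (p/2)) ^ 4
      - ((1/2:ℝ) ^ p + (1 - 1/2:ℝ) ^ p) ^ 2) = 6 * (1/4:ℝ) ^ p := by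
    have h2 : (1 - 1/2 : ℝ) = 1/2 := by norm_num
    rw [h2]
    have hc2 : ((1/2:ℝ) ^ (p/2))^2 = (1/2:ℝ) ^ p := sqr (1/2) (by norm_num)
    have hc4 : ((1/2:ℝ) ^ (p/2))^4 = (1/4:ℝ) ^ p := by
      have : ((1/4:ℝ)) = (1/2:ℝ)^(2:ℕ) := by norm_num
      rw [this, ← Real.rpow_natCast ((1/2:ℝ)) 2, ← Real.rpow_mul (by norm_num : (0:ℝ) ≤ 1/2),
        ← Real.rpow_natCast ((1/2:ℝ)^(p/2)) 4, ← Real.rpow_mul (by norm_num : (0:ℝ) ≤ 1/2)]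
      norm_num
      congr 1
      ring
    nlinarith [hc2, hc4, sq_nonneg ((1/2:ℝ)^(p/2))]
  -- main inequality: inner expression < 6 * (1/4)^p
  have habsum : (1/2) * ((a + b) ^ 4 - (l ^ p + (1-l) ^ p) ^ 2)
      = 2 * (a^3*b + a^2*b^2 + a*b^3) := by
    rw [← ha2, ← hb2]; ring
  -- identify terms as rpow of products
  have t1 : a^3*b = (l^3*(1-l)^1) ^ (p/2) := by rw [prod_rpow hl0 hl1', ← ha, ← hb, pow_one]
  have t2 : a^2*b^2 = (l^2*(1-l)^2) ^ (p/2) := by rw [prod_rpow hl0 hl1', ← ha, ← hb]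
  have t3 : a*b^3 = (l^1*(1-l)^3) ^ (p/2) := by rw [prod_rpow hl0 hl1', ← ha, ← hb, pow_one]
  set A := l^3*(1-l) with hA
  set B := l^2*(1-l)^2 with hB
  set C := l*(1-l)^3 with hC
  have hA0 : 0 ≤ A := by positivity
  have hB0 : 0 ≤ B := by positivity
  have hC0 : 0 ≤ C := by positivity
  have split : ∀ x : ℝ, 0 ≤ x → x ^ (p/2) = (x ^ ((3:ℝ)/2)) ^ (p/3) := by
    intro x hx
    rw [← Real.rpow_mul hx]
    congr 1
    ring
  have hs0 : 0 < p/3 := by linarith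
  have hs1 : p/3 ≤ 1 := by linarith
  have hXYZ : A ^ ((3:ℝ)/2) + B ^ ((3:ℝ)/2) + C ^ ((3:ℝ)/2) < 3/64 := key3 hl0 hl1 hne
  have hX0 : 0 ≤ A ^ ((3:ℝ)/2) := Real.rpow_nonneg hA0 _
  have hY0 : 0 ≤ B ^ ((3:ℝ)/2) := Real.rpow_nonneg hB0 _
  have hZ0 : 0 ≤ C ^ ((3:ℝ)/2) := Real.rpow_nonneg hC0 _
  have hpm := pm3 hX0 hY0 hZ0 hs0 hs1
  have hmono : ((A ^ ((3:ℝ)/2) + B ^ ((3:ℝ)/2) + C ^ ((3:ℝ)/2))/3) ^ (p/3)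
      < ((1:ℝ)/64) ^ (p/3) :=
    Real.rpow_lt_rpow (by positivity) (by linarith) hs0
  have h64 : ((1:ℝ)/64) ^ (p/3) = (1/4:ℝ) ^ p := by
    have : ((1:ℝ)/64) = (1/4:ℝ)^(3:ℕ) := by norm_num
    rw [this, ← Real.rpow_natCast ((1/4:ℝ)) 3, ← Real.rpow_mul (by norm_num : (0:ℝ) ≤ 1/4)]
    norm_num
    congr 1
    ring
  have hsum : a^3*b + a^2*b^2 + a*b^3 < 3 * (1/4:ℝ) ^ p := by
    have e1 : a^3*b = (A ^ ((3:ℝ)/2)) ^ (p/3) := by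
      rw [t1, pow_one, ← hA, split A hA0]
    have e2 : a^2*b^2 = (B ^ ((3:ℝ)/2)) ^ (p/3) := by
      rw [t2, split B hB0]
    have e3 : a*b^3 = (C ^ ((3:ℝ)/2)) ^ (p/3) := by
      rw [t3, pow_one, ← hC, split C hC0]
    rw [e1, e2, e3]
    calc (A ^ ((3:ℝ)/2)) ^ (p/3) + (B ^ ((3:ℝ)/2)) ^ (p/3) + (C ^ ((3:ℝ)/2)) ^ (p/3)
        ≤ 3 * ((A ^ ((3:ℝ)/2) + B ^ ((3:ℝ)/2) + C ^ ((3:ℝ)/2))/3) ^ (p/3) := hpm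
      _ < 3 * ((1:ℝ)/64) ^ (p/3) := by linarith
      _ = 3 * (1/4:ℝ) ^ p := by rw [h64]
  -- conclude
  rw [hF l, hF (1/2)]
  rw [hhalf, ← ha, ← hb, habsum]
  exact Real.rpow_lt_rpow (by positivity) (by linarith) (by positivity)
end

section
/- Let F_p(λ_1, λ_2) = [ (1/2)( μ_{p/2}^4 − μ_p^2 ) ]^{1/p} with μ_q = λ_1^q + λ_2^q, defined for λ_1, λ_2 ≥ 0 with λ_1 + λ_2 = 1. For 0 < p ≤ 3 and λ_1, λ_2 in the open interval (0,1), the Schur-concavity condition holds: (λ_1 − λ_2)(∂F_p/∂λ_1 − ∂F_p/∂λ_2) ≤ 0. -/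
open Matrix
open scoped ComplexOrder

-- core algebraic inequality
lemma core (u s : ℝ) (hu : 1 ≤ u) (hs : 1 ≤ s) (hsT : s ≤ u^3) :
    3*s^2 + 2*s + 1 ≤ u^2*(s^2 + 2*s + 3) := by
  rcases le_or_gt (u^2) 3 with h3 | h3
  · rcases eq_or_lt_of_le hu with rfl | hu1
    · nlinarith
    · have hT : (0:ℝ) < u^3 - 1 := by nlinarith
      nlinarith [mul_nonneg (mul_nonneg (by nlinarith : (0:ℝ) ≤ 3 - u^2) (by linarith : (0:ℝ) ≤ s - 1)) (by linarith : (0:ℝ) ≤ u^3 - s),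
        mul_nonneg (by linarith : (0:ℝ) ≤ u^3 - s) (by nlinarith : (0:ℝ) ≤ 6*(u^2-1)),
        mul_nonneg (by linarith : (0:ℝ) ≤ s - 1) (mul_nonneg (pow_nonneg (by linarith) 3) (by positivity) : (0:ℝ) ≤ (u-1)^3*(u^5+3*u^4+3*u^3+3*u^2+3*u+1)),
        mul_pos hT hT]
  · nlinarith [mul_nonneg (by linarith : (0:ℝ) ≤ u^2 - 3) (sq_nonneg s)]

lemma core2 (x y a b : ℝ) (hy : 0 < y) (hb : 0 < b) (hxy : y ≤ x) (hab : b ≤ a)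
    (hc : a^2 * y^3 ≤ b^2 * x^3) :
    y*(3*a^2+2*a*b+b^2) ≤ x*(a^2+2*a*b+3*b^2) := by
  have hx : 0 < x := lt_of_lt_of_le hy hxy
  have ha : 0 < a := lt_of_lt_of_le hb hab
  set u := Real.sqrt (x/y) with hu_def
  set s := a/b with hs_def
  have hu2 : u^2 = x/y := Real.sq_sqrt (by positivity)
  have hu : 1 ≤ u := by
    rw [show (1:ℝ) = Real.sqrt 1 by simp [Real.sqrt_one]]
    exact Real.sqrt_le_sqrt ((one_le_div hy).mpr hxy)
  have hs : 1 ≤ s := (one_le_div hb).mpr hab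
  have hs0 : 0 ≤ s := by positivity
  have hsq : s^2 ≤ (u^3)^2 := by
    have : (u^3)^2 = (x/y)^3 := by rw [← pow_mul, show 3*2 = 2*3 by ring, pow_mul, hu2]
    rw [this, hs_def, div_pow, div_pow]
    rw [div_le_div_iff₀ (by positivity) (by positivity)]
    nlinarith
  have hsT : s ≤ u^3 := by
    have := Real.sqrt_le_sqrt hsq
    rwa [Real.sqrt_sq hs0, Real.sqrt_sq (by positivity)] at this
  have key := core u s hu hs hsT
  rw [hu2] at key
  have h2 := mul_le_mul_of_nonneg_right key (by positivity : (0:ℝ) ≤ y*b^2)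
  have e1 : (3*s^2+2*s+1) * (y*b^2) = y*(3*a^2+2*a*b+b^2) := by
    rw [hs_def]; field_simp
  have e2 : (x/y*(s^2+2*s+3)) * (y*b^2) = x*(a^2+2*a*b+3*b^2) := by
    rw [hs_def]; field_simp
  linarith [e1 ▸ e2 ▸ h2]

lemma rpow_half_sq {t p : ℝ} (ht : 0 < t) : t ^ p = (t ^ (p/2))^2 := by
  rw [sq, ← Real.rpow_add ht]; ring_nf

lemma derivF (p : ℝ) (hp : 0 < p) (y : ℝ) (hy : 0 < y) (t : ℝ) (ht : 0 < t) :
    deriv (fun x : ℝ => ((1/2) * ((x ^ (p/2) + y ^ (p/2)) ^ 4 - (x ^ p + y ^ p) ^ 2)) ^ (1/p)) t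
    = ((1/2) * (4*(t ^ (p/2) + y ^ (p/2))^3 * (p/2 * t^(p/2-1)) - 2*(t^p + y^p) * (p * t^(p-1))))
      * (1/p) * ((1/2) * ((t ^ (p/2) + y ^ (p/2)) ^ 4 - (t ^ p + y ^ p) ^ 2)) ^ (1/p - 1) := by
  have ha : HasDerivAt (fun x : ℝ => x ^ (p/2)) (p/2 * t^(p/2-1)) t :=
    Real.hasDerivAt_rpow_const (Or.inl ht.ne')
  have hb : HasDerivAt (fun x : ℝ => x ^ p) (p * t^(p-1)) t :=
    Real.hasDerivAt_rpow_const (Or.inl ht.ne')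
  have h4 := (ha.add_const (y^(p/2))).pow 4
  have h2 := (hb.add_const (y^p)).pow 2
  have hin := (h4.sub h2).const_mul (1/2 : ℝ)
  have hA : (0:ℝ) < t ^ (p/2) := Real.rpow_pos_of_pos ht _
  have hB : (0:ℝ) < y ^ (p/2) := Real.rpow_pos_of_pos hy _
  have hpos : (0:ℝ) < (1/2) * ((t ^ (p/2) + y ^ (p/2)) ^ 4 - (t ^ p + y ^ p) ^ 2) := by
    rw [rpow_half_sq (p := p) ht, rpow_half_sq (p := p) hy]
    nlinarith [mul_pos hA hB, mul_pos (mul_pos hA hB) (mul_pos hA hB), mul_pos (mul_pos hA hA) (mul_pos hA hB), mul_pos (mul_pos hA hB) (mul_pos hB hB)]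
  have hfin := (hin.rpow_const (p := 1/p) (Or.inl hpos.ne')).deriv
  refine hfin.trans ?_
  norm_num

lemma rpow_half_sq' {t p : ℝ} (ht : 0 < t) : t ^ p = (t ^ (p/2))^2 := rpow_half_sq ht

/-- Schur-concavity condition for `F_p` when `0 < p ≤ 3`. -/
theorem stmt9 (p : ℝ) (hp : 0 < p) (hp3 : p ≤ 3)
    (G : ℝ → ℝ → ℝ)
    (hG : ∀ x y, G x y = ((1 / 2) * ((x ^ (p / 2) + y ^ (p / 2)) ^ 4
        - (x ^ p + y ^ p) ^ 2)) ^ (1 / p))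
    (l1 l2 : ℝ) (h1 : l1 ∈ Set.Ioo (0 : ℝ) 1) (h2 : l2 ∈ Set.Ioo (0 : ℝ) 1)
    (hsum : l1 + l2 = 1) :
    (l1 - l2) * (deriv (fun x => G x l2) l1 - deriv (fun y => G l1 y) l2) ≤ 0 := by
  obtain ⟨hx, -⟩ := h1
  obtain ⟨hy, -⟩ := h2
  set a := l1 ^ (p/2) with ha_def
  set b := l2 ^ (p/2) with hb_def
  have ha : 0 < a := Real.rpow_pos_of_pos hx _
  have hb : 0 < b := Real.rpow_pos_of_pos hy _
  have hx2 : l1 ^ p = a ^ 2 := rpow_half_sq' hx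
  have hy2 : l2 ^ p = b ^ 2 := rpow_half_sq' hy
  have e1h : l1 ^ (p/2 - 1) = a / l1 := by rw [Real.rpow_sub hx, Real.rpow_one]
  have e1p : l1 ^ (p - 1) = a ^ 2 / l1 := by rw [Real.rpow_sub hx, Real.rpow_one, hx2]
  have e2h : l2 ^ (p/2 - 1) = b / l2 := by rw [Real.rpow_sub hy, Real.rpow_one]
  have e2p : l2 ^ (p - 1) = b ^ 2 / l2 := by rw [Real.rpow_sub hy, Real.rpow_one, hy2]
  set W : ℝ := (1/2) * ((a + b) ^ 4 - (a^2 + b^2) ^ 2) with hW_def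
  clear_value a b W
  have hKpos : (0:ℝ) ≤ (1/p) * W ^ (1/p - 1) := by
    have hWpos : 0 < W := by rw [hW_def]; nlinarith [mul_pos ha hb, mul_pos (mul_pos ha hb) (mul_pos ha hb), mul_pos (mul_pos ha ha) (mul_pos ha hb), mul_pos (mul_pos ha hb) (mul_pos hb hb)]
    positivity
  have d1 : deriv (fun x => G x l2) l1
      = (p * a * b * (3*a^2 + 2*a*b + b^2) / l1) * ((1/p) * W ^ (1/p - 1)) := by
    have hfun : (fun x => G x l2)
        = fun x : ℝ => ((1/2) * ((x ^ (p/2) + l2 ^ (p/2)) ^ 4 - (x ^ p + l2 ^ p) ^ 2)) ^ (1/p) :=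
      funext fun x => by rw [hG x l2]
    rw [hfun, derivF p hp l2 hy l1 hx, hx2, hy2, e1h, e1p, ← ha_def, ← hb_def, ← hW_def]
    rw [show (1/2 : ℝ) * (4*(a + b)^3 * (p/2 * (a/l1)) - 2*(a^2 + b^2) * (p * (a^2/l1)))
        = p * a * b * (3*a^2 + 2*a*b + b^2) / l1 by field_simp; ring]
    ring
  have d2 : deriv (fun y => G l1 y) l2
      = (p * a * b * (a^2 + 2*a*b + 3*b^2) / l2) * ((1/p) * W ^ (1/p - 1)) := by
    have hfun : (fun y => G l1 y)
        = fun y : ℝ => ((1/2) * ((y ^ (p/2) + l1 ^ (p/2)) ^ 4 - (y ^ p + l1 ^ p) ^ 2)) ^ (1/p) :=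
      funext fun y => by rw [hG l1 y, add_comm (l1 ^ (p/2)) (y ^ (p/2)), add_comm (l1 ^ p) (y ^ p)]
    rw [hfun, derivF p hp l1 hx l2 hy, hx2, hy2, e2h, e2p, ← ha_def, ← hb_def]
    rw [show (1/2 : ℝ) * (4*(b + a)^3 * (p/2 * (b/l2)) - 2*(b^2 + a^2) * (p * (b^2/l2)))
        = p * a * b * (a^2 + 2*a*b + 3*b^2) / l2 by field_simp; ring]
    rw [show (1/2 : ℝ) * ((b + a)^4 - (b^2 + a^2)^2) = W by rw [hW_def]; ring]
    ring
  rw [d1, d2]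
  -- key sign fact
  have hZ : (l1 - l2) * (l2*(3*a^2+2*a*b+b^2) - l1*(a^2+2*a*b+3*b^2)) ≤ 0 := by
    rcases le_total l2 l1 with hle | hle
    · have hab : b ≤ a := by
        rw [ha_def, hb_def]; exact Real.rpow_le_rpow hy.le hle (by positivity)
      have hc : a^2 * l2^3 ≤ b^2 * l1^3 := by
        have hdiv : (1:ℝ) ≤ l1 / l2 := (one_le_div hy).mpr hle
        have h := Real.rpow_le_rpow_of_exponent_le hdiv hp3
        rw [Real.div_rpow hx.le hy.le, Real.div_rpow hx.le hy.le] at h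
        rw [div_le_div_iff₀ (Real.rpow_pos_of_pos hy p) (Real.rpow_pos_of_pos hy 3)] at h
        have h3 : ∀ z : ℝ, 0 < z → z ^ (3:ℝ) = z ^ (3:ℕ) := fun z hz => by
          rw [← Real.rpow_natCast z 3]; norm_num
        rw [h3 l1 hx, h3 l2 hy, hx2, hy2] at h
        linarith
      have hcc := core2 l1 l2 a b hy hb hle hab hc
      have := mul_nonneg (sub_nonneg.mpr hle) (sub_nonneg.mpr hcc)
      linarith [this]
    · have hab : a ≤ b := by
        rw [ha_def, hb_def]; exact Real.rpow_le_rpow hx.le hle (by positivity)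
      have hc : b^2 * l1^3 ≤ a^2 * l2^3 := by
        have hdiv : (1:ℝ) ≤ l2 / l1 := (one_le_div hx).mpr hle
        have h := Real.rpow_le_rpow_of_exponent_le hdiv hp3
        rw [Real.div_rpow hy.le hx.le, Real.div_rpow hy.le hx.le] at h
        rw [div_le_div_iff₀ (Real.rpow_pos_of_pos hx p) (Real.rpow_pos_of_pos hx 3)] at h
        have h3 : ∀ z : ℝ, 0 < z → z ^ (3:ℝ) = z ^ (3:ℕ) := fun z hz => by
          rw [← Real.rpow_natCast z 3]; norm_num
        rw [h3 l1 hx, h3 l2 hy, hx2, hy2] at h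
        linarith
      have hcc := core2 l2 l1 b a hx ha hle hab hc
      have := mul_nonneg (sub_nonneg.mpr hle) (sub_nonneg.mpr hcc)
      linarith [this]
  have hmain : (l1 - l2) * (p * a * b * (3*a^2 + 2*a*b + b^2) / l1 - p * a * b * (a^2 + 2*a*b + 3*b^2) / l2) ≤ 0 := by
    have heq : (l1 - l2) * (p * a * b * (3*a^2 + 2*a*b + b^2) / l1 - p * a * b * (a^2 + 2*a*b + 3*b^2) / l2)
        = (p * a * b / (l1 * l2)) * ((l1 - l2) * (l2*(3*a^2+2*a*b+b^2) - l1*(a^2+2*a*b+3*b^2))) := by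
      field_simp
    rw [heq]
    exact mul_nonpos_iff.mpr (Or.inl ⟨by positivity, hZ⟩)
  calc (l1 - l2) * (p * a * b * (3*a^2+2*a*b+b^2) / l1 * ((1/p) * W ^ (1/p-1))
        - p * a * b * (a^2+2*a*b+3*b^2) / l2 * ((1/p) * W ^ (1/p-1)))
      = ((1/p) * W ^ (1/p-1)) * ((l1 - l2) * (p * a * b * (3*a^2+2*a*b+b^2) / l1 - p * a * b * (a^2+2*a*b+3*b^2) / l2)) := by ring
    _ ≤ 0 := mul_nonpos_iff.mpr (Or.inl ⟨hKpos, hmain⟩)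
end

section
/- For λ ∈ [0,1], define g(θ) = √(λ(1−λ)) { [2 + |(1−2λ) sin 2θ|] + (1/√2) √( 1 + 4λ(1−λ) + (4λ(1−λ) − 1) cos 4θ ) }. Then min over θ ∈ ℝ of g(θ) equals 2√(λ(1−λ)) (1 + √(λ(1−λ))), and the minimum is attained at θ = 0. -/
open Matrix
open scoped ComplexOrder

/-- The basis-dependent one-norm quantity is minimized at `θ = 0` with value
`2√(λ(1−λ))(1+√(λ(1−λ)))`. -/
theorem stmt10 (l : ℝ) (hl : l ∈ Set.Icc (0 : ℝ) 1)
    (g : ℝ → ℝ)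
    (hg : ∀ θ, g θ = Real.sqrt (l * (1 - l)) *
      ((2 + |(1 - 2 * l) * Real.sin (2 * θ)|) +
        (1 / Real.sqrt 2) * Real.sqrt (1 + 4 * l * (1 - l)
          + (4 * l * (1 - l) - 1) * Real.cos (4 * θ)))) :
    (∀ θ, g 0 ≤ g θ) ∧
      g 0 = 2 * Real.sqrt (l * (1 - l)) * (1 + Real.sqrt (l * (1 - l))) := by
  obtain ⟨h0, h1⟩ := hl
  have hm0 : 0 ≤ l * (1 - l) := mul_nonneg h0 (by linarith)
  have hs2 : (0:ℝ) < Real.sqrt 2 := Real.sqrt_pos.mpr (by norm_num)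
  have hsq2 : Real.sqrt 2 ^ 2 = 2 := Real.sq_sqrt (by norm_num)
  have hsqm : Real.sqrt (l * (1 - l)) ^ 2 = l * (1 - l) := Real.sq_sqrt hm0
  have hsqm0 : 0 ≤ Real.sqrt (l * (1 - l)) := Real.sqrt_nonneg _
  have h8 : Real.sqrt (1 + 4 * l * (1 - l) + (4 * l * (1 - l) - 1) * Real.cos (4 * 0))
      = 2 * Real.sqrt 2 * Real.sqrt (l * (1 - l)) := by
    have : 1 + 4 * l * (1 - l) + (4 * l * (1 - l) - 1) * Real.cos (4 * 0)
        = (2 * Real.sqrt 2 * Real.sqrt (l * (1 - l))) ^ 2 := by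
      simp only [mul_zero, Real.cos_zero]
      nlinarith [hsq2, hsqm]
    rw [this, Real.sqrt_sq (by positivity)]
  have hg0 : g 0 = 2 * Real.sqrt (l * (1 - l)) * (1 + Real.sqrt (l * (1 - l))) := by
    rw [hg 0, h8]
    simp only [mul_zero, Real.sin_zero, mul_zero, abs_zero]
    field_simp
    ring
  refine ⟨fun θ => ?_, hg0⟩
  rw [hg 0, hg θ, h8]
  apply mul_le_mul_of_nonneg_left _ hsqm0
  have hc : Real.cos (4 * θ) ≤ 1 := Real.cos_le_one _
  have hA : 2 * Real.sqrt 2 * Real.sqrt (l * (1 - l))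
      ≤ Real.sqrt (1 + 4 * l * (1 - l) + (4 * l * (1 - l) - 1) * Real.cos (4 * θ)) := by
    have : (2 * Real.sqrt 2 * Real.sqrt (l * (1 - l))) ^ 2
        ≤ 1 + 4 * l * (1 - l) + (4 * l * (1 - l) - 1) * Real.cos (4 * θ) := by
      nlinarith [hsq2, hsqm, sq_nonneg (1 - 2 * l)]
    calc 2 * Real.sqrt 2 * Real.sqrt (l * (1 - l))
        = Real.sqrt ((2 * Real.sqrt 2 * Real.sqrt (l * (1 - l))) ^ 2) :=
          (Real.sqrt_sq (by positivity)).symm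
      _ ≤ _ := Real.sqrt_le_sqrt this
  have habs : (0:ℝ) ≤ |(1 - 2 * l) * Real.sin (2 * θ)| := abs_nonneg _
  have h12 : (0:ℝ) ≤ 1 / Real.sqrt 2 := by positivity
  simp only [mul_zero, Real.sin_zero, mul_zero, abs_zero]
  nlinarith [mul_le_mul_of_nonneg_left hA h12]
end

section
/- Let ρ = p ρ_0 ⊗ |0⟩⟨0| + (1−p) ρ_1 ⊗ |1⟩⟨1| be a two-qubit quantum-classical state with ρ_i = (I + s_i·σ)/2, s_0 = (0,0,s₀), s_1 = (s₁ sin φ, 0, s₁ cos φ). Measuring in the computational basis {|0⟩, |1⟩} of qubit B, the only nonzero commutator among the A_ij is [A_00, A_11] (up to sign and adjoints), and its Hilbert–Schmidt norm satisfies ‖[A_00, A_11]‖₂ = p(1−p) s₀ s₁ |sin φ| / √2, so that D_{p=2}(ρ) = p(1−p) s₀ s₁ sin φ / √2 for φ ∈ [0, π]. -/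
open Matrix
open scoped ComplexOrder

/-- For the two-qubit quantum-classical state, only the commutator `[A₀₀, A₁₁]` (up to
order) is nonzero, its Hilbert–Schmidt norm is `p(1−p)s₀s₁|sin φ|/√2`, and
`D_{p=2}(ρ) = p(1−p)s₀s₁ sin φ / √2`. -/
theorem stmt17 (p s0 s1 φ : ℝ) (hp : p ∈ Set.Icc (0 : ℝ) 1)
    (hs0 : s0 ∈ Set.Icc (0 : ℝ) 1) (hs1 : s1 ∈ Set.Icc (0 : ℝ) 1)
    (hφ : φ ∈ Set.Icc (0 : ℝ) Real.pi)
    (ρ0 ρ1 : Matrix (Fin 2) (Fin 2) ℂ)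
    (hρ0 : ρ0 = (1 / 2 : ℂ) • (1 + (s0 : ℂ) • !![1, 0; 0, -1]))
    (hρ1 : ρ1 = (1 / 2 : ℂ) • (1 + ((s1 * Real.sin φ : ℝ) : ℂ) • !![0, 1; 1, 0]
        + ((s1 * Real.cos φ : ℝ) : ℂ) • !![1, 0; 0, -1]))
    (ρ : Matrix (Fin 2 × Fin 2) (Fin 2 × Fin 2) ℂ)
    (hρ : ∀ a b a' b', ρ (a, b) (a', b') =
      (if b = 0 ∧ b' = 0 then (p : ℂ) * ρ0 a a' else 0) +
      (if b = 1 ∧ b' = 1 then ((1 - p : ℝ) : ℂ) * ρ1 a a' else 0))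
    (A : Fin 2 → Fin 2 → Matrix (Fin 2) (Fin 2) ℂ)
    (hA : ∀ i j a a', A i j a a' = ρ (a, i) (a', j)) :
    (∀ i j k l : Fin 2,
      ¬(((i, j) = ((0 : Fin 2), (0 : Fin 2)) ∧ (k, l) = ((1 : Fin 2), (1 : Fin 2))) ∨
        ((i, j) = ((1 : Fin 2), (1 : Fin 2)) ∧ (k, l) = ((0 : Fin 2), (0 : Fin 2)))) →
      A i j * A k l - A k l * A i j = 0) ∧
    Real.sqrt (((A 0 0 * A 1 1 - A 1 1 * A 0 0) *
        (A 0 0 * A 1 1 - A 1 1 * A 0 0)ᴴ).trace.re)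
      = p * (1 - p) * s0 * s1 * |Real.sin φ| / Real.sqrt 2 ∧
    Real.sqrt ((1 / 2) * ∑ i : Fin 2, ∑ j : Fin 2, ∑ k : Fin 2, ∑ l : Fin 2,
        ((A i j * A k l - A k l * A i j) * (A i j * A k l - A k l * A i j)ᴴ).trace.re)
      = p * (1 - p) * s0 * s1 * Real.sin φ / Real.sqrt 2 := by
  have hA00 : A 0 0 = (p : ℂ) • ρ0 := by
    ext a a'; simp [hA, hρ]
  have hA11 : A 1 1 = ((1 - p : ℝ) : ℂ) • ρ1 := by
    ext a a'; simp [hA, hρ]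
  have hA01 : A 0 1 = 0 := by
    ext a a'; simp [hA, hρ]
  have hA10 : A 1 0 = 0 := by
    ext a a'; simp [hA, hρ]
  set c : ℝ := p * (1 - p) * s0 * (s1 * Real.sin φ) / 2 with hc
  have hC : A 0 0 * A 1 1 - A 1 1 * A 0 0 = !![0, (c : ℂ); -(c : ℂ), 0] := by
    subst hρ0 hρ1
    ext a a'
    fin_cases a <;> fin_cases a' <;>
      simp [hA00, hA11, Matrix.mul_apply, Fin.sum_univ_two, hc] <;> ring
  have hC' : A 1 1 * A 0 0 - A 0 0 * A 1 1 = !![0, -(c : ℂ); (c : ℂ), 0] := by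
    have h := congrArg Neg.neg hC
    rw [neg_sub] at h
    rw [h]
    ext a a'; fin_cases a <;> fin_cases a' <;> simp
  have ht : ∀ x : ℝ, ((!![0, (x : ℂ); -(x : ℂ), 0] * (!![0, (x : ℂ); -(x : ℂ), 0])ᴴ).trace.re)
      = 2 * x ^ 2 := by
    intro x
    have hct : (!![0, (x : ℂ); -(x : ℂ), 0])ᴴ = !![0, -(x : ℂ); (x : ℂ), 0] := by
      ext a a'
      fin_cases a <;> fin_cases a' <;>
        simp [Matrix.conjTranspose_apply, Complex.conj_ofReal]
    have htr : (!![0, (x : ℂ); -(x : ℂ), 0] * (!![0, (x : ℂ); -(x : ℂ), 0])ᴴ).trace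
        = ((2 * x ^ 2 : ℝ) : ℂ) := by
      rw [hct, Matrix.trace_fin_two]
      simp [Matrix.mul_apply, Fin.sum_univ_two]
      push_cast
      ring
    rw [htr, Complex.ofReal_re]
  have ht' : ((!![0, -(c : ℂ); (c : ℂ), 0] * (!![0, -(c : ℂ); (c : ℂ), 0])ᴴ).trace.re)
      = 2 * c ^ 2 := by
    have h := ht (-c)
    push_cast at h
    rw [neg_neg] at h
    simpa [neg_sq] using h
  have hp0 : 0 ≤ p := hp.1
  have hp1 : 0 ≤ 1 - p := by linarith [hp.2]
  have hs0' : 0 ≤ s0 := hs0.1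
  have hs1' : 0 ≤ s1 := hs1.1
  have hsin : 0 ≤ Real.sin φ := Real.sin_nonneg_of_nonneg_of_le_pi hφ.1 hφ.2
  have hsq2 : Real.sqrt 2 ≠ 0 := by positivity
  have hmain : Real.sqrt (2 * c ^ 2) = p * (1 - p) * s0 * s1 * Real.sin φ / Real.sqrt 2 := by
    rw [show (2 : ℝ) * c ^ 2 = (Real.sqrt 2 * c) ^ 2 by
      rw [mul_pow, Real.sq_sqrt (by norm_num : (0:ℝ) ≤ 2)],
      Real.sqrt_sq (by positivity)]
    rw [eq_div_iff hsq2, hc]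
    have h2 : Real.sqrt 2 * Real.sqrt 2 = 2 := Real.mul_self_sqrt (by norm_num)
    linear_combination (p * (1 - p) * s0 * (s1 * Real.sin φ) / 2) * h2
  have part1 : ∀ i j k l : Fin 2,
      ¬(((i, j) = ((0 : Fin 2), (0 : Fin 2)) ∧ (k, l) = ((1 : Fin 2), (1 : Fin 2))) ∨
        ((i, j) = ((1 : Fin 2), (1 : Fin 2)) ∧ (k, l) = ((0 : Fin 2), (0 : Fin 2)))) →
      A i j * A k l - A k l * A i j = 0 := by
    intro i j k l h
    have e : ∀ x : Fin 2, x = 0 ∨ x = 1 := by decide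
    rcases e i with rfl | rfl <;> rcases e j with rfl | rfl <;>
      rcases e k with rfl | rfl <;> rcases e l with rfl | rfl <;>
      first
        | exact absurd (by decide) h
        | simp only [hA01, hA10, Matrix.zero_mul, Matrix.mul_zero, sub_zero,
            zero_sub, sub_self, neg_zero]
  have hz : ∀ i j k l : Fin 2,
      ¬(((i, j) = ((0 : Fin 2), (0 : Fin 2)) ∧ (k, l) = ((1 : Fin 2), (1 : Fin 2))) ∨
        ((i, j) = ((1 : Fin 2), (1 : Fin 2)) ∧ (k, l) = ((0 : Fin 2), (0 : Fin 2)))) →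
      ((A i j * A k l - A k l * A i j) * (A i j * A k l - A k l * A i j)ᴴ).trace.re = 0 := by
    intro i j k l h
    rw [part1 i j k l h]
    simp
  have h2c : ((A 0 0 * A 1 1 - A 1 1 * A 0 0) *
      (A 0 0 * A 1 1 - A 1 1 * A 0 0)ᴴ).trace.re = 2 * c ^ 2 := by rw [hC]; exact ht c
  have h2c' : ((A 1 1 * A 0 0 - A 0 0 * A 1 1) *
      (A 1 1 * A 0 0 - A 0 0 * A 1 1)ᴴ).trace.re = 2 * c ^ 2 := by rw [hC']; exact ht'
  refine ⟨part1, ?_, ?_⟩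
  · rw [h2c, abs_of_nonneg hsin]
    exact hmain
  · simp only [Fin.sum_univ_two]
    rw [hz 0 0 0 0 (by decide), hz 0 0 0 1 (by decide), hz 0 0 1 0 (by decide),
        h2c, hz 0 1 0 0 (by decide), hz 0 1 0 1 (by decide), hz 0 1 1 0 (by decide),
        hz 0 1 1 1 (by decide), hz 1 0 0 0 (by decide), hz 1 0 0 1 (by decide),
        hz 1 0 1 0 (by decide), hz 1 0 1 1 (by decide), h2c', hz 1 1 0 1 (by decide),
        hz 1 1 1 0 (by decide), hz 1 1 1 1 (by decide)]
    rw [show (1/2 : ℝ) * (0 + 0 + (0 + 2 * c ^ 2) + (0 + 0 + (0 + 0)) +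
        (0 + 0 + (0 + 0) + (2 * c ^ 2 + 0 + (0 + 0)))) = 2 * c ^ 2 by ring]
    exact hmain
end
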